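/- Let O_K = Z[ω] be the ring of integers of K = Q(√−3), where ω = (−1 + √−3)/2 is a primitive third root of unity, and let p ≥ 5 be a prime. Then units a, b, c ∈ O_Kˣ satisfy a^p + b^p + c^p = 0 if and only if there exist a unit u ∈ O_Kˣ and a permutation (x, y, z) of the triple (1, ω, ω²) such that (a, b, c) = (ux, uy, uz). -/

import Mathlib

open NumberField
section Aux
variable {K : Type*} [Field K] [NumberField K]

lemma aux_indep (s : K) (hs : s ^ 2 = -3) :
    LinearIndependent ℚ ![(1 : K), s] := by
  rw [linearIndependent_fin2]
  refine ⟨?_, ?_⟩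
  · show s ≠ 0
    intro h; rw [h] at hs; norm_num at hs
  · intro q hq
    have hq' : (q : K) * s = 1 := by
      rw [Algebra.smul_def, eq_ratCast] at hq; exact hq
    have h1 : ((q ^ 2 * (-3) : ℚ) : K) = ((1 : ℚ) : K) := by
      push_cast
      linear_combination ((q : K) * s + 1) * hq' - (q : K) ^ 2 * hs
    have h2 : (q : ℚ) ^ 2 * (-3) = 1 := by exact_mod_cast h1
    nlinarith [sq_nonneg (q : ℚ)]

lemma aux_unique (s : K) (hs : s ^ 2 = -3)
    (α β : ℚ) (h : (α : K) + (β : K) * s = 0) : α = 0 ∧ β = 0 := by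
  have hli := aux_indep s hs
  rw [Fintype.linearIndependent_iff] at hli
  have := hli ![α, β] ?_
  · exact ⟨this 0, this 1⟩
  · simp only [Fin.sum_univ_two, Matrix.cons_val_zero, Matrix.cons_val_one, Matrix.head_cons]
    rw [Algebra.smul_def, eq_ratCast, Algebra.smul_def, eq_ratCast, mul_one]
    exact h

noncomputable def theB (hdeg : Module.finrank ℚ K = 2) (s : K) (hs : s ^ 2 = -3) :
    Module.Basis (Fin 2) ℚ K :=
  basisOfLinearIndependentOfCardEqFinrank (aux_indep s hs) (by simp [hdeg])

lemma aux_coords (hdeg : Module.finrank ℚ K = 2) (s : K) (hs : s ^ 2 = -3) (x : K) :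
    ∃ q r : ℚ, x = (q : K) + (r : K) * s := by
  let B := theB hdeg s hs
  have hB : ⇑B = ![(1 : K), s] := coe_basisOfLinearIndependentOfCardEqFinrank _ _
  refine ⟨B.repr x 0, B.repr x 1, ?_⟩
  have h := B.sum_repr x
  rw [Fin.sum_univ_two] at h
  rw [show B 0 = 1 from by rw [hB]; rfl, show B 1 = s from by rw [hB]; rfl] at h
  rw [Algebra.smul_def, eq_ratCast, Algebra.smul_def, eq_ratCast, mul_one] at h
  exact h.symm

lemma theB_repr_eq (hdeg : Module.finrank ℚ K = 2) (s : K) (hs : s ^ 2 = -3)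
    (x : K) (q r : ℚ) (hx : x = (q : K) + (r : K) * s) :
    (theB hdeg s hs).repr x 0 = q ∧ (theB hdeg s hs).repr x 1 = r := by
  set B := theB hdeg s hs with hBdef
  have hB : ⇑B = ![(1 : K), s] := coe_basisOfLinearIndependentOfCardEqFinrank _ _
  have h := B.sum_repr x
  rw [Fin.sum_univ_two] at h
  rw [show B 0 = 1 from by rw [hB]; rfl, show B 1 = s from by rw [hB]; rfl] at h
  rw [Algebra.smul_def, eq_ratCast, Algebra.smul_def, eq_ratCast, mul_one] at h
  have hx2 : x = ((B.repr x 0 : ℚ) : K) + ((B.repr x 1 : ℚ) : K) * s := h.symm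
  have key : ((q - B.repr x 0 : ℚ) : K) + ((r - B.repr x 1 : ℚ) : K) * s = 0 := by
    push_cast
    linear_combination hx2 - hx
  obtain ⟨h0, h1⟩ := aux_unique s hs _ _ key
  constructor <;> linarith

noncomputable def conjF (hdeg : Module.finrank ℚ K = 2) (s : K) (hs : s ^ 2 = -3) : K → K :=
  fun x => 2 * ((theB hdeg s hs).repr x 0 : K) - x

lemma conjF_eq (hdeg : Module.finrank ℚ K = 2) (s : K) (hs : s ^ 2 = -3)
    (x : K) (q r : ℚ) (hx : x = (q : K) + (r : K) * s) :
    conjF hdeg s hs x = (q : K) - (r : K) * s := by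
  obtain ⟨h0, _⟩ := theB_repr_eq hdeg s hs x q r hx
  unfold conjF
  rw [h0, hx]; ring

noncomputable def conjHom (hdeg : Module.finrank ℚ K = 2) (s : K) (hs : s ^ 2 = -3) :
    K →+* K where
  toFun := conjF hdeg s hs
  map_one' := by
    rw [conjF_eq hdeg s hs 1 1 0 (by push_cast; ring)]; push_cast; ring
  map_mul' x y := by
    show conjF hdeg s hs (x * y) = conjF hdeg s hs x * conjF hdeg s hs y
    obtain ⟨q1, r1, h1⟩ := aux_coords hdeg s hs x
    obtain ⟨q2, r2, h2⟩ := aux_coords hdeg s hs y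
    have hxy : x * y = ((q1 * q2 - 3 * (r1 * r2) : ℚ) : K) + ((q1 * r2 + q2 * r1 : ℚ) : K) * s := by
      rw [h1, h2]; push_cast
      linear_combination ((r1 : K) * (r2 : K)) * hs
    rw [conjF_eq hdeg s hs x q1 r1 h1, conjF_eq hdeg s hs y q2 r2 h2,
      conjF_eq hdeg s hs (x * y) _ _ hxy]
    push_cast
    linear_combination (-(r1 : K) * (r2 : K)) * hs
  map_zero' := by
    show conjF hdeg s hs 0 = 0
    rw [conjF_eq hdeg s hs 0 0 0 (by push_cast; ring)]; push_cast; ring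
  map_add' x y := by
    show conjF hdeg s hs (x + y) = conjF hdeg s hs x + conjF hdeg s hs y
    obtain ⟨q1, r1, h1⟩ := aux_coords hdeg s hs x
    obtain ⟨q2, r2, h2⟩ := aux_coords hdeg s hs y
    have hxy : x + y = ((q1 + q2 : ℚ) : K) + ((r1 + r2 : ℚ) : K) * s := by
      rw [h1, h2]; push_cast; ring
    rw [conjF_eq hdeg s hs x q1 r1 h1, conjF_eq hdeg s hs y q2 r2 h2,
      conjF_eq hdeg s hs (x + y) _ _ hxy]
    push_cast; ring

lemma rat_integral (q : ℚ) (h : IsIntegral ℤ ((q : K))) : ∃ n : ℤ, (n : ℚ) = q := by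
  have h2 : IsIntegral ℤ q := by
    rwa [show ((q : K)) = algebraMap ℚ K q from (eq_ratCast _ q).symm,
      isIntegral_algebraMap_iff ((algebraMap ℚ K).injective)] at h
  obtain ⟨n, hn⟩ := IsIntegrallyClosed.isIntegral_iff.mp h2
  exact ⟨n, by rw [← hn]; simp⟩

lemma s_integral (s : K) (hs : s ^ 2 = -3) : IsIntegral ℤ s := by
  refine ⟨Polynomial.X ^ 2 + Polynomial.C 3, ?_, ?_⟩
  · exact Polynomial.monic_X_pow_add_C 3 (by norm_num)
  · simp [hs]

lemma uval_coords {K : Type*} [Field K] [NumberField K]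
    (s : K) (hs : s ^ 2 = -3)
    (ω : 𝓞 K) (hω : algebraMap (𝓞 K) K ω = (-1 + s) / 2) (j : Fin 6) :
    algebraMap (𝓞 K) K (![1, -1, ω, -ω, ω ^ 2, -ω ^ 2] j)
      = ((![1, -1, -1/2, 1/2, -1/2, 1/2] j : ℚ) : K)
        + ((![0, 0, 1/2, -1/2, -1/2, 1/2] j : ℚ) : K) * s := by
  fin_cases j
  · show algebraMap (𝓞 K) K 1 = ((1 : ℚ) : K) + ((0 : ℚ) : K) * s
    rw [map_one]; push_cast; ring
  · show algebraMap (𝓞 K) K (-1) = ((-1 : ℚ) : K) + ((0 : ℚ) : K) * s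
    rw [map_neg, map_one]; push_cast; ring
  · show algebraMap (𝓞 K) K ω = ((-1/2 : ℚ) : K) + ((1/2 : ℚ) : K) * s
    rw [hω]; push_cast; ring
  · show algebraMap (𝓞 K) K (-ω) = ((1/2 : ℚ) : K) + ((-1/2 : ℚ) : K) * s
    rw [map_neg, hω]; push_cast; ring
  · show algebraMap (𝓞 K) K (ω ^ 2) = ((-1/2 : ℚ) : K) + ((-1/2 : ℚ) : K) * s
    rw [map_pow, hω]; push_cast; linear_combination (1/4 : K) * hs
  · show algebraMap (𝓞 K) K (-ω ^ 2) = ((1/2 : ℚ) : K) + ((1/2 : ℚ) : K) * s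
    rw [map_neg, map_pow, hω]; push_cast; linear_combination (-1/4 : K) * hs

lemma units_classified {K : Type*} [Field K] [NumberField K]
    (hdeg : Module.finrank ℚ K = 2) (s : K) (hs : s ^ 2 = -3)
    (ω : 𝓞 K) (hω : algebraMap (𝓞 K) K ω = (-1 + s) / 2)
    (u : (𝓞 K)ˣ) :
    ∃ j : Fin 6, (u : 𝓞 K) = ![1, -1, ω, -ω, ω ^ 2, -ω ^ 2] j := by
  set φ := conjHom hdeg s hs with hφ
  set x := algebraMap (𝓞 K) K ((u : 𝓞 K)) with hxdef
  set y := algebraMap (𝓞 K) K ((↑u⁻¹ : 𝓞 K)) with hydef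
  have hxy : x * y = 1 := by
    rw [hxdef, hydef, ← map_mul, ← Units.val_mul, mul_inv_cancel, Units.val_one, map_one]
  have hxint : IsIntegral ℤ x := RingOfIntegers.isIntegral_coe _
  have hyint : IsIntegral ℤ y := RingOfIntegers.isIntegral_coe _
  have hsint : IsIntegral ℤ s := s_integral s hs
  obtain ⟨q, r, hqr⟩ := aux_coords hdeg s hs x
  obtain ⟨q', r', hqr'⟩ := aux_coords hdeg s hs y
  have hφx : φ x = (q : K) - (r : K) * s := conjF_eq hdeg s hs x q r hqr
  have hφy : φ y = (q' : K) - (r' : K) * s := conjF_eq hdeg s hs y q' r' hqr'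
  have hconjint : ∀ z : K, IsIntegral ℤ z → IsIntegral ℤ (φ z) := fun z hz =>
    hz.map φ.toIntAlgHom
  have hxnorm : ((q ^ 2 + 3 * r ^ 2 : ℚ) : K) = x * φ x := by
    rw [hφx, hqr]; push_cast; linear_combination (r : K) ^ 2 * hs
  have hynorm : ((q' ^ 2 + 3 * r' ^ 2 : ℚ) : K) = y * φ y := by
    rw [hφy, hqr']; push_cast; linear_combination (r' : K) ^ 2 * hs
  obtain ⟨T, hT⟩ : ∃ T : ℤ, (T : ℚ) = 2 * q := by
    refine rat_integral (K := K) (2 * q) ?_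
    have : ((2 * q : ℚ) : K) = x + φ x := by rw [hφx, hqr]; push_cast; ring
    rw [this]; exact hxint.add (hconjint x hxint)
  obtain ⟨R, hR⟩ : ∃ R : ℤ, (R : ℚ) = -6 * r := by
    refine rat_integral (K := K) (-6 * r) ?_
    have hxs : x * s = ((-3 * r : ℚ) : K) + ((q : ℚ) : K) * s := by
      rw [hqr]; push_cast; linear_combination (r : K) * hs
    have hφxs : φ (x * s) = ((-3 * r : ℚ) : K) - ((q : ℚ) : K) * s :=
      conjF_eq hdeg s hs (x * s) _ _ hxs
    have : ((-6 * r : ℚ) : K) = x * s + φ (x * s) := by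
      rw [hφxs, hxs]; push_cast; ring
    rw [this]; exact (hxint.mul hsint).add (hconjint _ (hxint.mul hsint))
  obtain ⟨N, hN⟩ : ∃ N : ℤ, (N : ℚ) = q ^ 2 + 3 * r ^ 2 := by
    refine rat_integral (K := K) _ ?_
    rw [hxnorm]; exact hxint.mul (hconjint x hxint)
  obtain ⟨N', hN'⟩ : ∃ N' : ℤ, (N' : ℚ) = q' ^ 2 + 3 * r' ^ 2 := by
    refine rat_integral (K := K) _ ?_
    rw [hynorm]; exact hyint.mul (hconjint y hyint)
  have main : ((q ^ 2 + 3 * r ^ 2 : ℚ) : K) * ((q' ^ 2 + 3 * r' ^ 2 : ℚ) : K) = 1 := by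
    have h2 : φ (x * y) = 1 := by rw [hxy, map_one]
    rw [hxnorm, hynorm,
      show (x * φ x) * (y * φ y) = (x * y) * φ (x * y) from by rw [map_mul]; ring,
      h2, hxy, mul_one]
  have mainQ : ((q ^ 2 + 3 * r ^ 2) * (q' ^ 2 + 3 * r' ^ 2) : ℚ) = 1 := by
    have : (((q ^ 2 + 3 * r ^ 2) * (q' ^ 2 + 3 * r' ^ 2) : ℚ) : K) = ((1 : ℚ) : K) := by
      push_cast at main ⊢; linear_combination main
    exact_mod_cast this
  have hNN' : N * N' = 1 := by
    have : ((N * N' : ℤ) : ℚ) = ((1 : ℤ) : ℚ) := by push_cast [hN, hN']; linear_combination mainQ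
    exact_mod_cast this
  have hNpos : 0 ≤ N := by
    have : (0 : ℚ) ≤ (N : ℚ) := by rw [hN]; positivity
    exact_mod_cast this
  have hN1 : N = 1 := by
    rcases Int.isUnit_iff.mp (IsUnit.of_mul_eq_one N' hNN') with h | h
    · exact h
    · omega
  have e3 : (1 : ℚ) = q ^ 2 + 3 * r ^ 2 := by rw [← hN, hN1]; norm_num
  have e4 : 3 * T ^ 2 + R ^ 2 = 12 := by
    have : ((3 * T ^ 2 + R ^ 2 : ℤ) : ℚ) = ((12 : ℤ) : ℚ) := by
      push_cast
      linear_combination (3 * (T : ℚ) + 6 * q) * hT + ((R : ℚ) - 6 * r) * hR - 12 * e3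
    exact_mod_cast this
  have hTb : -2 ≤ T ∧ T ≤ 2 := by constructor <;> nlinarith
  have hRb : -3 ≤ R ∧ R ≤ 3 := by constructor <;> nlinarith
  have hcase : (T = 2 ∧ R = 0) ∨ (T = -2 ∧ R = 0) ∨ (T = -1 ∧ R = -3) ∨ (T = -1 ∧ R = 3)
      ∨ (T = 1 ∧ R = -3) ∨ (T = 1 ∧ R = 3) := by
    obtain ⟨h1, h2⟩ := hTb; obtain ⟨h3, h4⟩ := hRb
    interval_cases T <;> interval_cases R <;> omega
  have key : ∀ j : Fin 6, x = algebraMap (𝓞 K) K (![1, -1, ω, -ω, ω ^ 2, -ω ^ 2] j)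
      → (u : 𝓞 K) = ![1, -1, ω, -ω, ω ^ 2, -ω ^ 2] j := fun j hj =>
    NumberField.RingOfIntegers.coe_injective hj
  have fin : ∀ (j : Fin 6) (qv rv : ℚ), q = qv → r = rv →
      (![1, -1, -1/2, 1/2, -1/2, 1/2] j : ℚ) = qv →
      (![0, 0, 1/2, -1/2, -1/2, 1/2] j : ℚ) = rv →
      ∃ j' : Fin 6, (u : 𝓞 K) = ![1, -1, ω, -ω, ω ^ 2, -ω ^ 2] j' := by
    intro j qv rv hq hr hA hB
    refine ⟨j, key j ?_⟩
    rw [uval_coords s hs ω hω j, hqr, hq, hr, hA, hB]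
  rcases hcase with ⟨h1, h2⟩ | ⟨h1, h2⟩ | ⟨h1, h2⟩ | ⟨h1, h2⟩ | ⟨h1, h2⟩ | ⟨h1, h2⟩
  · exact fin 0 1 0 (by rw [h1] at hT; push_cast at hT; linarith)
      (by rw [h2] at hR; push_cast at hR; linarith) rfl rfl
  · exact fin 1 (-1) 0 (by rw [h1] at hT; push_cast at hT; linarith)
      (by rw [h2] at hR; push_cast at hR; linarith) rfl rfl
  · exact fin 2 (-1/2) (1/2) (by rw [h1] at hT; push_cast at hT; linarith)
      (by rw [h2] at hR; push_cast at hR; linarith) rfl rfl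
  · exact fin 4 (-1/2) (-1/2) (by rw [h1] at hT; push_cast at hT; linarith)
      (by rw [h2] at hR; push_cast at hR; linarith) rfl rfl
  · exact fin 5 (1/2) (1/2) (by rw [h1] at hT; push_cast at hT; linarith)
      (by rw [h2] at hR; push_cast at hR; linarith) rfl rfl
  · exact fin 3 (1/2) (-1/2) (by rw [h1] at hT; push_cast at hT; linarith)
      (by rw [h2] at hR; push_cast at hR; linarith) rfl rfl

lemma sum_lemma {K : Type*} [Field K] [NumberField K]
    (hdeg : Module.finrank ℚ K = 2) (s : K) (hs : s ^ 2 = -3)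
    (ω : 𝓞 K) (hω : algebraMap (𝓞 K) K ω = (-1 + s) / 2)
    (a b c : (𝓞 K)ˣ) (h : (a : 𝓞 K) + (b : 𝓞 K) + (c : 𝓞 K) = 0) :
    ∃ u : (𝓞 K)ˣ, ∃ σ : Equiv.Perm (Fin 3), ∀ i : Fin 3,
      ![(a : 𝓞 K), (b : 𝓞 K), (c : 𝓞 K)] i = (u : 𝓞 K) * ![1, ω, ω ^ 2] (σ i) := by
  have hb : (a : 𝓞 K) * ↑(a⁻¹ * b) = ↑b := by
    rw [Units.val_mul, ← mul_assoc, Units.mul_inv, one_mul]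
  have hc : (a : 𝓞 K) * ↑(a⁻¹ * c) = ↑c := by
    rw [Units.val_mul, ← mul_assoc, Units.mul_inv, one_mul]
  have hsum : (1 : 𝓞 K) + ↑(a⁻¹ * b) + ↑(a⁻¹ * c) = 0 := by
    have h2 : (a : 𝓞 K) * ((1 : 𝓞 K) + ↑(a⁻¹ * b) + ↑(a⁻¹ * c)) = 0 := by
      rw [mul_add, mul_add, hb, hc, mul_one]; exact h
    exact (mul_eq_zero.mp h2).resolve_left (Units.ne_zero a)
  obtain ⟨j, hj⟩ := units_classified hdeg s hs ω hω (a⁻¹ * b)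
  obtain ⟨k, hk⟩ := units_classified hdeg s hs ω hω (a⁻¹ * c)
  have hsumK : (1 : K) + algebraMap (𝓞 K) K ↑(a⁻¹ * b) + algebraMap (𝓞 K) K ↑(a⁻¹ * c) = 0 := by
    have h2 := congrArg (algebraMap (𝓞 K) K) hsum
    simpa using h2
  rw [hj, hk, uval_coords s hs ω hω j, uval_coords s hs ω hω k] at hsumK
  obtain ⟨hA, hB⟩ := aux_unique s hs
    (1 + ![1, -1, -1/2, 1/2, -1/2, 1/2] j + ![1, -1, -1/2, 1/2, -1/2, 1/2] k)
    (![0, 0, 1/2, -1/2, -1/2, 1/2] j + ![0, 0, 1/2, -1/2, -1/2, 1/2] k)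
    (by push_cast; linear_combination hsumK)
  have cast2 : ∀ t : Fin 6, (((![2, -2, -1, 1, -1, 1] : Fin 6 → ℤ) t : ℤ) : ℚ)
      = 2 * ![1, -1, -1/2, 1/2, -1/2, 1/2] t := by
    intro t
    fin_cases t
    · show ((2 : ℤ) : ℚ) = 2 * (1 : ℚ); norm_num
    · show ((-2 : ℤ) : ℚ) = 2 * (-1 : ℚ); norm_num
    · show ((-1 : ℤ) : ℚ) = 2 * (-1/2 : ℚ); norm_num
    · show ((1 : ℤ) : ℚ) = 2 * (1/2 : ℚ); norm_num
    · show ((-1 : ℤ) : ℚ) = 2 * (-1/2 : ℚ); norm_num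
    · show ((1 : ℤ) : ℚ) = 2 * (1/2 : ℚ); norm_num
  have cast3 : ∀ t : Fin 6, (((![0, 0, 1, -1, -1, 1] : Fin 6 → ℤ) t : ℤ) : ℚ)
      = 2 * ![0, 0, 1/2, -1/2, -1/2, 1/2] t := by
    intro t
    fin_cases t
    · show ((0 : ℤ) : ℚ) = 2 * (0 : ℚ); norm_num
    · show ((0 : ℤ) : ℚ) = 2 * (0 : ℚ); norm_num
    · show ((1 : ℤ) : ℚ) = 2 * (1/2 : ℚ); norm_num
    · show ((-1 : ℤ) : ℚ) = 2 * (-1/2 : ℚ); norm_num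
    · show ((-1 : ℤ) : ℚ) = 2 * (-1/2 : ℚ); norm_num
    · show ((1 : ℤ) : ℚ) = 2 * (1/2 : ℚ); norm_num
  have hAz : (2 : ℤ) + (![2, -2, -1, 1, -1, 1] : Fin 6 → ℤ) j
      + (![2, -2, -1, 1, -1, 1] : Fin 6 → ℤ) k = 0 := by
    have hq : (((2 : ℤ) + (![2, -2, -1, 1, -1, 1] : Fin 6 → ℤ) j
        + (![2, -2, -1, 1, -1, 1] : Fin 6 → ℤ) k : ℤ) : ℚ) = ((0 : ℤ) : ℚ) := by
      push_cast [cast2]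
      linear_combination 2 * hA
    exact_mod_cast hq
  have hBz : (![0, 0, 1, -1, -1, 1] : Fin 6 → ℤ) j
      + (![0, 0, 1, -1, -1, 1] : Fin 6 → ℤ) k = 0 := by
    have hq : (((![0, 0, 1, -1, -1, 1] : Fin 6 → ℤ) j
        + (![0, 0, 1, -1, -1, 1] : Fin 6 → ℤ) k : ℤ) : ℚ) = ((0 : ℤ) : ℚ) := by
      push_cast [cast3]
      linear_combination 2 * hB
    exact_mod_cast hq
  have hjk : (j = 2 ∧ k = 4) ∨ (j = 4 ∧ k = 2) := by
    fin_cases j <;> fin_cases k <;> revert hAz hBz <;> decide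
  rcases hjk with ⟨rfl, rfl⟩ | ⟨rfl, rfl⟩
  · have hj' : (↑(a⁻¹ * b) : 𝓞 K) = ω := hj
    have hk' : (↑(a⁻¹ * c) : 𝓞 K) = ω ^ 2 := hk
    refine ⟨a, Equiv.refl _, ?_⟩
    intro i
    fin_cases i
    · show (a : 𝓞 K) = (a : 𝓞 K) * 1; rw [mul_one]
    · show (b : 𝓞 K) = (a : 𝓞 K) * ω; rw [← hj']; exact hb.symm
    · show (c : 𝓞 K) = (a : 𝓞 K) * ω ^ 2; rw [← hk']; exact hc.symm
  · have hj' : (↑(a⁻¹ * b) : 𝓞 K) = ω ^ 2 := hj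
    have hk' : (↑(a⁻¹ * c) : 𝓞 K) = ω := hk
    refine ⟨a, Equiv.swap 1 2, ?_⟩
    intro i
    fin_cases i
    · show (a : 𝓞 K) = (a : 𝓞 K) * ![1, ω, ω ^ 2] (Equiv.swap (1 : Fin 3) 2 0)
      rw [Equiv.swap_apply_of_ne_of_ne (by decide) (by decide)]
      show (a : 𝓞 K) = (a : 𝓞 K) * 1; rw [mul_one]
    · show (b : 𝓞 K) = (a : 𝓞 K) * ![1, ω, ω ^ 2] (Equiv.swap (1 : Fin 3) 2 1)
      rw [Equiv.swap_apply_left]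
      show (b : 𝓞 K) = (a : 𝓞 K) * ω ^ 2; rw [← hj']; exact hb.symm
    · show (c : 𝓞 K) = (a : 𝓞 K) * ![1, ω, ω ^ 2] (Equiv.swap (1 : Fin 3) 2 2)
      rw [Equiv.swap_apply_right]
      show (c : 𝓞 K) = (a : 𝓞 K) * ω; rw [← hk']; exact hc.symm

lemma pow_six {K : Type*} [Field K] [NumberField K]
    (hdeg : Module.finrank ℚ K = 2) (s : K) (hs : s ^ 2 = -3)
    (ω : 𝓞 K) (hω : algebraMap (𝓞 K) K ω = (-1 + s) / 2)
    (hω' : ω ^ 2 + ω + 1 = 0) (u : (𝓞 K)ˣ) : (u : 𝓞 K) ^ 6 = 1 := by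
  have h3 : ω ^ 3 = 1 := by linear_combination (ω - 1) * hω'
  obtain ⟨j, hj⟩ := units_classified hdeg s hs ω hω u
  fin_cases j
  · rw [show (↑u : 𝓞 K) = 1 from hj]; norm_num
  · rw [show (↑u : 𝓞 K) = -1 from hj]; norm_num
  · rw [show (↑u : 𝓞 K) = ω from hj]; linear_combination (ω ^ 3 + 1) * h3
  · rw [show (↑u : 𝓞 K) = -ω from hj]; linear_combination (ω ^ 3 + 1) * h3
  · rw [show (↑u : 𝓞 K) = ω ^ 2 from hj]
    linear_combination (ω ^ 9 + ω ^ 6 + ω ^ 3 + 1) * h3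
  · rw [show (↑u : 𝓞 K) = -ω ^ 2 from hj]
    linear_combination (ω ^ 9 + ω ^ 6 + ω ^ 3 + 1) * h3

lemma pow_mod_six {R : Type*} [CommRing R] (x : R) (h : x ^ 6 = 1) (p : ℕ) :
    x ^ p = x ^ (p % 6) := by
  conv_lhs => rw [show p = 6 * (p / 6) + p % 6 from (Nat.div_add_mod p 6).symm]
  rw [pow_add, pow_mul, h, one_pow, one_mul]

end Aux

open NumberField

/-- Let `K = ℚ(√−3)` with ring of integers `ℤ[ω]`, where
`ω = (−1+√−3)/2` is a primitive third root of unity, and let `p ≥ 5` be prime.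
Units `a, b, c` of `𝓞_K` satisfy `aᵖ + bᵖ + cᵖ = 0` if and only if `(a, b, c)` is a
unit multiple of a permutation of `(1, ω, ω²)`. -/
theorem unit_solutions_of_fermat_over_Q_sqrt_minus_three
    (K : Type*) [Field K] [NumberField K] (hdeg : Module.finrank ℚ K = 2)
    (sqd : K) (hsqd : sqd ^ 2 = -(3 : K))
    (ω : 𝓞 K) (hω : algebraMap (𝓞 K) K ω = (-1 + sqd) / 2)
    (hω' : ω ^ 2 + ω + 1 = 0)
    (p : ℕ) (hp : p.Prime) (hp5 : 5 ≤ p)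
    (a b c : (𝓞 K)ˣ) :
    (a : 𝓞 K) ^ p + (b : 𝓞 K) ^ p + (c : 𝓞 K) ^ p = 0 ↔
      ∃ u : (𝓞 K)ˣ, ∃ σ : Equiv.Perm (Fin 3),
        ∀ i : Fin 3,
          ![(a : 𝓞 K), (b : 𝓞 K), (c : 𝓞 K)] i = (u : 𝓞 K) * ![1, ω, ω ^ 2] (σ i) := by
  have h3 : ω ^ 3 = 1 := by linear_combination (ω - 1) * hω'
  have hnd2 : ¬ (2 ∣ p) := fun hd => by
    rcases hp.eq_one_or_self_of_dvd 2 hd with h | h <;> omega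
  have hnd3 : ¬ (3 ∣ p) := fun hd => by
    rcases hp.eq_one_or_self_of_dvd 3 hd with h | h <;> omega
  constructor
  · -- forward
    intro heq
    have hp6 : p % 6 = 1 ∨ p % 6 = 5 := by omega
    have h6a : (a : 𝓞 K) ^ 6 = 1 := pow_six hdeg sqd hsqd ω hω hω' a
    have h6b : (b : 𝓞 K) ^ 6 = 1 := pow_six hdeg sqd hsqd ω hω hω' b
    have h6c : (c : 𝓞 K) ^ 6 = 1 := pow_six hdeg sqd hsqd ω hω hω' c
    rcases hp6 with hm | hm
    · have ea : (a : 𝓞 K) ^ p = (a : 𝓞 K) := by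
        rw [pow_mod_six _ h6a, hm, pow_one]
      have eb : (b : 𝓞 K) ^ p = (b : 𝓞 K) := by
        rw [pow_mod_six _ h6b, hm, pow_one]
      have ec : (c : 𝓞 K) ^ p = (c : 𝓞 K) := by
        rw [pow_mod_six _ h6c, hm, pow_one]
      exact sum_lemma hdeg sqd hsqd ω hω a b c (by rw [← ea, ← eb, ← ec]; exact heq)
    · have inv5 : ∀ d : (𝓞 K)ˣ, (d : 𝓞 K) ^ 6 = 1 → (d : 𝓞 K) ^ p = ↑d⁻¹ := by
        intro d hd
        rw [pow_mod_six _ hd, hm]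
        have h1 : (d : 𝓞 K) * (d : 𝓞 K) ^ 5 = (d : 𝓞 K) * ↑d⁻¹ := by
          rw [Units.mul_inv, ← pow_succ']
          exact hd
        exact mul_left_cancel₀ (Units.ne_zero d) h1
      have ea := inv5 a h6a
      have eb := inv5 b h6b
      have ec := inv5 c h6c
      obtain ⟨u, σ, hrep⟩ := sum_lemma hdeg sqd hsqd ω hω a⁻¹ b⁻¹ c⁻¹
        (by rw [← ea, ← eb, ← ec]; exact heq)
      have vmul : ∀ jj : Fin 3,
          (![1, ω, ω ^ 2] jj : 𝓞 K) * ![1, ω, ω ^ 2] (Equiv.swap (1 : Fin 3) 2 jj) = 1 := by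
        intro jj
        fin_cases jj
        · show (1 : 𝓞 K) * ![1, ω, ω ^ 2] (Equiv.swap (1 : Fin 3) 2 0) = 1
          rw [Equiv.swap_apply_of_ne_of_ne (by decide) (by decide)]
          show (1 : 𝓞 K) * 1 = 1; rw [mul_one]
        · show (ω : 𝓞 K) * ![1, ω, ω ^ 2] (Equiv.swap (1 : Fin 3) 2 1) = 1
          rw [Equiv.swap_apply_left]
          show ω * ω ^ 2 = 1
          linear_combination h3
        · show (ω ^ 2 : 𝓞 K) * ![1, ω, ω ^ 2] (Equiv.swap (1 : Fin 3) 2 2) = 1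
          rw [Equiv.swap_apply_right]
          show ω ^ 2 * ω = 1
          linear_combination h3
      have transfer : ∀ x x' uu uu' vv vv' : 𝓞 K, x * x' = 1 → uu * uu' = 1 →
          vv * vv' = 1 → x' = uu * vv → x = uu' * vv' := by
        intro x x' uu uu' vv vv' h1 h2 hv3 h4
        have hxx : x = x * ((uu * vv) * (uu' * vv')) := by
          rw [show (uu * vv) * (uu' * vv') = (uu * uu') * (vv * vv') from by ring, h2, hv3,
            mul_one, mul_one]
        rw [hxx, ← h4, ← mul_assoc, h1, one_mul]
      refine ⟨u⁻¹, σ.trans (Equiv.swap 1 2), ?_⟩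
      intro i
      have hx : (![(↑a : 𝓞 K), ↑b, ↑c] i) * (![(↑a⁻¹ : 𝓞 K), ↑b⁻¹, ↑c⁻¹] i) = 1 := by
        fin_cases i
        · exact Units.mul_inv a
        · exact Units.mul_inv b
        · exact Units.mul_inv c
      have hrepi : (![(↑a⁻¹ : 𝓞 K), ↑b⁻¹, ↑c⁻¹] i) = (u : 𝓞 K) * ![1, ω, ω ^ 2] (σ i) := hrep i
      have goal' := transfer (![(↑a : 𝓞 K), ↑b, ↑c] i) (![(↑a⁻¹ : 𝓞 K), ↑b⁻¹, ↑c⁻¹] i)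
        (u : 𝓞 K) (↑u⁻¹ : 𝓞 K) (![1, ω, ω ^ 2] (σ i))
        (![1, ω, ω ^ 2] (Equiv.swap (1 : Fin 3) 2 (σ i)))
        hx (Units.mul_inv u) (vmul (σ i)) hrepi
      exact goal'
  · -- reverse
    rintro ⟨u, σ, hrep⟩
    have hp3 : p % 3 = 1 ∨ p % 3 = 2 := by omega
    have hsum0 : (1 : 𝓞 K) ^ p + ω ^ p + (ω ^ 2) ^ p = 0 := by
      rcases hp3 with hm | hm
      · have e1 : ω ^ p = ω := by
          conv_lhs => rw [show p = 3 * (p / 3) + 1 from by omega]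
          rw [pow_add, pow_mul, h3, one_pow, one_mul, pow_one]
        have e2 : (ω ^ 2) ^ p = ω ^ 2 := by rw [pow_right_comm, e1]
        rw [one_pow, e1, e2]
        linear_combination hω'
      · have e1 : ω ^ p = ω ^ 2 := by
          conv_lhs => rw [show p = 3 * (p / 3) + 2 from by omega]
          rw [pow_add, pow_mul, h3, one_pow, one_mul]
        have e2 : (ω ^ 2) ^ p = ω := by
          rw [pow_right_comm, e1]
          linear_combination ω * h3
        rw [one_pow, e1, e2]
        linear_combination hω'
    have ha : (a : 𝓞 K) = (u : 𝓞 K) * ![1, ω, ω ^ 2] (σ 0) := hrep 0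
    have hb : (b : 𝓞 K) = (u : 𝓞 K) * ![1, ω, ω ^ 2] (σ 1) := hrep 1
    have hc : (c : 𝓞 K) = (u : 𝓞 K) * ![1, ω, ω ^ 2] (σ 2) := hrep 2
    have hperm := Equiv.sum_comp σ (fun jj => (![1, ω, ω ^ 2] jj : 𝓞 K) ^ p)
    rw [Fin.sum_univ_three, Fin.sum_univ_three] at hperm
    have hσ : (![1, ω, ω ^ 2] (σ 0) : 𝓞 K) ^ p + (![1, ω, ω ^ 2] (σ 1) : 𝓞 K) ^ p
        + (![1, ω, ω ^ 2] (σ 2) : 𝓞 K) ^ p = 0 := by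
      rw [hperm]
      show (1 : 𝓞 K) ^ p + ω ^ p + (ω ^ 2) ^ p = 0
      exact hsum0
    rw [ha, hb, hc]
    calc ((u : 𝓞 K) * ![1, ω, ω ^ 2] (σ 0)) ^ p + ((u : 𝓞 K) * ![1, ω, ω ^ 2] (σ 1)) ^ p
          + ((u : 𝓞 K) * ![1, ω, ω ^ 2] (σ 2)) ^ p
        = (u : 𝓞 K) ^ p * ((![1, ω, ω ^ 2] (σ 0) : 𝓞 K) ^ p
            + (![1, ω, ω ^ 2] (σ 1) : 𝓞 K) ^ p + (![1, ω, ω ^ 2] (σ 2) : 𝓞 K) ^ p) := by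
          ring
      _ = 0 := by rw [hσ, mul_zero]
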